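/- Let G : Ω → ℝ^d be bounded, continuous, and Lipschitz along constant shifts (there is L ≥ 0 with ‖G(V + x𝟙) − G(V + y𝟙)‖ ≤ L‖x − y‖ for all V ∈ Ω, x, y ∈ ℝ^d), and for W ∈ Ω let φ_W : ℝ → ℝ^d be the unique continuous solution of φ_W(s) = ∫₀^s G(θ_v W + φ_W(v)𝟙) dv. If W_n → W uniformly on compact subsets of ℝ, then φ_{W_n} → φ_W uniformly on compact subsets of ℝ; consequently, for every T > 0, θ_s W_n + φ_{W_n}(s)𝟙 → θ_s W + φ_W(s)𝟙 uniformly on compacts, uniformly in s ∈ [−T, T]. -/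
import Mathlib


open MeasureTheory Filter Topology

/-- The time shift `θ_s` on the path space `C(ℝ, ℝ^d)`: `(θ_s W)(u) = W(u + s)`. -/
noncomputable def pathShift {d : ℕ} (s : ℝ) (W : C(ℝ, EuclideanSpace ℝ (Fin d))) :
    C(ℝ, EuclideanSpace ℝ (Fin d)) :=
  W.comp ⟨fun u => u + s, by continuity⟩

lemma continuous_pathShift {d : ℕ} :
    Continuous (fun p : C(ℝ, EuclideanSpace ℝ (Fin d)) × ℝ => pathShift p.2 p.1) := by
  have hτ : Continuous (fun s : ℝ =>
      (ContinuousMap.curry ⟨fun q : ℝ × ℝ => q.2 + q.1, by continuity⟩ : C(ℝ, C(ℝ, ℝ))) s) :=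
    (ContinuousMap.curry _).continuous
  have h := Continuous.compCM (continuous_fst :
      Continuous fun p : C(ℝ, EuclideanSpace ℝ (Fin d)) × ℝ => p.1)
    (hτ.comp (continuous_snd : Continuous fun p : C(ℝ, EuclideanSpace ℝ (Fin d)) × ℝ => p.2))
  have heq : (fun p : C(ℝ, EuclideanSpace ℝ (Fin d)) × ℝ => pathShift p.2 p.1) =
      fun p => p.1.comp ((ContinuousMap.curry ⟨fun q : ℝ × ℝ => q.2 + q.1, by continuity⟩) p.2) := by
    funext p
    ext u
    rfl
  rw [heq]
  exact h

lemma gronwallBound_mono_x {L η : ℝ} (hL : 0 ≤ L) (hη : 0 ≤ η) {x y : ℝ} (hx : 0 ≤ x)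
    (hxy : x ≤ y) : gronwallBound 0 L η x ≤ gronwallBound 0 L η y := by
  by_cases hLne : L = 0
  · simp only [gronwallBound, if_pos hLne]
    nlinarith
  · have h : 0 < L := lt_of_le_of_ne hL (Ne.symm hLne)
    simp only [gronwallBound, if_neg hLne, zero_mul, zero_add]
    have : Real.exp (L * x) ≤ Real.exp (L * y) :=
      Real.exp_le_exp.2 (by nlinarith)
    have hdiv : 0 ≤ η / L := div_nonneg hη h.le
    nlinarith

lemma gronwall_two_sided {E : Type*} [NormedAddCommGroup E] [NormedSpace ℝ E]
    {f f' : ℝ → E} {L η T : ℝ} (hL : 0 ≤ L) (hη : 0 ≤ η) (hT : 0 ≤ T)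
    (hd : ∀ s, HasDerivAt f (f' s) s) (h0 : f 0 = 0)
    (hb : ∀ s ∈ Set.Icc (-T) T, ‖f' s‖ ≤ L * ‖f s‖ + η) :
    ∀ s ∈ Set.Icc (-T) T, ‖f s‖ ≤ gronwallBound 0 L η T := by
  have hpos : ∀ s ∈ Set.Icc (0:ℝ) T, ‖f s‖ ≤ gronwallBound 0 L η (s - 0) := by
    refine norm_le_gronwallBound_of_norm_deriv_right_le
      (fun s _ => ((hd s).continuousAt.continuousWithinAt)) (fun s _ => (hd s).hasDerivWithinAt)
      (by simp [h0]) (fun s hs => hb s ⟨by linarith [hs.1], hs.2.le⟩)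
  have hneg : ∀ s ∈ Set.Icc (0:ℝ) T, ‖f (-s)‖ ≤ gronwallBound 0 L η (s - 0) := by
    have hd' : ∀ s : ℝ, HasDerivAt (fun u => f (-u)) ((-1 : ℝ) • f' (-s)) s := fun s =>
      (hd (-s)).scomp s (hasDerivAt_neg s)
    refine norm_le_gronwallBound_of_norm_deriv_right_le
      (fun s _ => ((hd' s).continuousAt.continuousWithinAt)) (fun s _ => (hd' s).hasDerivWithinAt)
      (by simp [h0]) (fun s hs => ?_)
    rw [norm_smul]
    simpa using hb (-s) ⟨by linarith [hs.2], by linarith [hs.1]⟩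
  intro s hs
  rcases le_total 0 s with h | h
  · calc ‖f s‖ ≤ gronwallBound 0 L η (s - 0) := hpos s ⟨h, hs.2⟩
      _ ≤ gronwallBound 0 L η T := by
          rw [sub_zero]; exact gronwallBound_mono_x hL hη h hs.2
  · have hs' : -s ∈ Set.Icc (0:ℝ) T := ⟨by linarith, by linarith [hs.1]⟩
    calc ‖f s‖ = ‖f (-(-s))‖ := by rw [neg_neg]
      _ ≤ gronwallBound 0 L η (-s - 0) := hneg (-s) hs'
      _ ≤ gronwallBound 0 L η T := by
          rw [sub_zero]; exact gronwallBound_mono_x hL hη hs'.1 hs'.2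

/-- Continuous dependence of the solution `φ_W` of the integral equation on the path `W`:
convergence of `W_n` to `W` uniformly on compacts implies convergence of `φ_{W_n}` to
`φ_W` uniformly on compacts, and hence convergence of the flows
`θ_s W_n + φ_{W_n}(s)𝟙 → θ_s W + φ_W(s)𝟙` uniformly on compacts, uniformly in
`s ∈ [−T, T]`. -/
theorem stmt_3 (d : ℕ)
    (G : C(ℝ, EuclideanSpace ℝ (Fin d)) → EuclideanSpace ℝ (Fin d))
    (hGb : ∃ M : ℝ, ∀ W, ‖G W‖ ≤ M) (hGc : Continuous G)
    (L : ℝ) (hL : 0 ≤ L)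
    (hLip : ∀ (V : C(ℝ, EuclideanSpace ℝ (Fin d))) (x y : EuclideanSpace ℝ (Fin d)),
      ‖G (V + ContinuousMap.const ℝ x) - G (V + ContinuousMap.const ℝ y)‖ ≤ L * ‖x - y‖)
    (φ : C(ℝ, EuclideanSpace ℝ (Fin d)) → ℝ → EuclideanSpace ℝ (Fin d))
    (hφ : ∀ W, Continuous (φ W) ∧
      ∀ s : ℝ, φ W s = ∫ v in (0:ℝ)..s, G (pathShift v W + ContinuousMap.const ℝ (φ W v)))
    (Wn : ℕ → C(ℝ, EuclideanSpace ℝ (Fin d))) (W : C(ℝ, EuclideanSpace ℝ (Fin d)))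
    (hWn : ∀ K : Set ℝ, IsCompact K →
      TendstoUniformlyOn (fun n u => Wn n u) (fun u => W u) atTop K) :
    (∀ K : Set ℝ, IsCompact K →
      TendstoUniformlyOn (fun n s => φ (Wn n) s) (φ W) atTop K) ∧
    (∀ T : ℝ, 0 < T → ∀ K : Set ℝ, IsCompact K →
      TendstoUniformlyOn
        (fun n (p : ℝ × ℝ) =>
          (pathShift p.1 (Wn n) + ContinuousMap.const ℝ (φ (Wn n) p.1)) p.2)
        (fun p => (pathShift p.1 W + ContinuousMap.const ℝ (φ W p.1)) p.2)
        atTop (Set.Icc (-T) T ×ˢ K)) := by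
  classical
  have hcontφ : ∀ V, Continuous (φ V) := fun V => (hφ V).1
  have hzero : ∀ V, φ V 0 = 0 := fun V => by
    rw [(hφ V).2 0, intervalIntegral.integral_same]
  have hInt : ∀ (V : C(ℝ, EuclideanSpace ℝ (Fin d))),
      Continuous (fun v => G (pathShift v V + ContinuousMap.const ℝ (φ V v))) := by
    intro V
    exact hGc.comp
      ((continuous_pathShift.comp ((continuous_const (y := V)).prodMk continuous_id)).add
        (ContinuousMap.continuous_const'.comp (hcontφ V)))
  have hD : ∀ V s, HasDerivAt (φ V)
      (G (pathShift s V + ContinuousMap.const ℝ (φ V s))) s := by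
    intro V s
    have hI : HasDerivAt (fun u => ∫ v in (0:ℝ)..u,
        G (pathShift v V + ContinuousMap.const ℝ (φ V v)))
        (G (pathShift s V + ContinuousMap.const ℝ (φ V s))) s :=
      intervalIntegral.integral_hasDerivAt_right
        ((hInt V).intervalIntegrable _ _)
        ((hInt V).stronglyMeasurable.stronglyMeasurableAtFilter)
        (hInt V).continuousAt
    exact hI.congr_of_eventuallyEq (Filter.Eventually.of_forall fun u => (hφ V).2 u)
  have key : ∀ T : ℝ, 0 < T →
      TendstoUniformlyOn (fun n s => φ (Wn n) s) (φ W) atTop (Set.Icc (-T) T) := by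
    intro T hT
    rw [Metric.tendstoUniformlyOn_iff]
    intro ε' hε'
    have hcontε : Tendsto (fun η => gronwallBound 0 L η T) (𝓝[>] 0) (𝓝 0) := by
      have h0 := (gronwallBound_continuous_ε 0 L T).tendsto 0
      have : gronwallBound 0 L 0 T = 0 := by rw [gronwallBound_ε0]; ring
      rw [this] at h0
      exact h0.mono_left nhdsWithin_le_nhds
    obtain ⟨η, hηlt, hηpos⟩ :=
      ((hcontε.eventually_lt_const hε').and self_mem_nhdsWithin).exists
    have hWtend : Tendsto Wn atTop (𝓝 W) :=
      ContinuousMap.tendsto_iff_forall_isCompact_tendstoUniformlyOn.2 hWn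
    have hFunc : Continuous (fun p : C(ℝ, EuclideanSpace ℝ (Fin d)) × ℝ =>
        G (pathShift p.2 p.1 + ContinuousMap.const ℝ (φ W p.2))) :=
      hGc.comp (continuous_pathShift.add
        (ContinuousMap.continuous_const'.comp ((hcontφ W).comp continuous_snd)))
    set F : C(ℝ, EuclideanSpace ℝ (Fin d)) → C(ℝ, EuclideanSpace ℝ (Fin d)) :=
      fun V => ⟨fun v => G (pathShift v V + ContinuousMap.const ℝ (φ W v)),
        hFunc.comp (continuous_const.prodMk continuous_id)⟩ with hFdef
    have hFc : Continuous F := ContinuousMap.continuous_of_continuous_uncurry _ hFunc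
    have hFtend : TendstoUniformlyOn (fun n v => F (Wn n) v) (fun v => F W v) atTop
        (Set.Icc (-T) T) :=
      ContinuousMap.tendsto_iff_forall_isCompact_tendstoUniformlyOn.1
        ((hFc.tendsto W).comp hWtend) _ isCompact_Icc
    rw [Metric.tendstoUniformlyOn_iff] at hFtend
    filter_upwards [hFtend η hηpos] with n hn s hs
    have hbound : ∀ v ∈ Set.Icc (-T) T,
        ‖(G (pathShift v (Wn n) + ContinuousMap.const ℝ (φ (Wn n) v)))
          - (G (pathShift v W + ContinuousMap.const ℝ (φ W v)))‖
          ≤ L * ‖φ (Wn n) v - φ W v‖ + η := by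
      intro v hv
      have h1 := hLip (pathShift v (Wn n)) (φ (Wn n) v) (φ W v)
      have h2 := hn v hv
      rw [dist_eq_norm] at h2
      calc ‖(G (pathShift v (Wn n) + ContinuousMap.const ℝ (φ (Wn n) v)))
            - (G (pathShift v W + ContinuousMap.const ℝ (φ W v)))‖
          ≤ ‖(G (pathShift v (Wn n) + ContinuousMap.const ℝ (φ (Wn n) v)))
              - (G (pathShift v (Wn n) + ContinuousMap.const ℝ (φ W v)))‖
            + ‖(G (pathShift v (Wn n) + ContinuousMap.const ℝ (φ W v)))
              - (G (pathShift v W + ContinuousMap.const ℝ (φ W v)))‖ :=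
            norm_sub_le_norm_sub_add_norm_sub _ _ _
        _ ≤ L * ‖φ (Wn n) v - φ W v‖ + η := by
            refine add_le_add h1 ?_
            rw [← norm_neg, neg_sub]
            exact le_of_lt h2
    have hgron := gronwall_two_sided (f := fun s => φ (Wn n) s - φ W s)
      (f' := fun s => (G (pathShift s (Wn n) + ContinuousMap.const ℝ (φ (Wn n) s)))
        - (G (pathShift s W + ContinuousMap.const ℝ (φ W s))))
      hL hηpos.le hT.le
      (fun s => ((hD (Wn n) s).sub (hD W s)))
      (by simp [hzero]) hbound s hs
    rw [dist_eq_norm]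
    calc ‖φ W s - φ (Wn n) s‖ = ‖φ (Wn n) s - φ W s‖ := norm_sub_rev _ _
      _ ≤ gronwallBound 0 L η T := hgron
      _ < ε' := hηlt
  have part1 : ∀ K : Set ℝ, IsCompact K →
      TendstoUniformlyOn (fun n s => φ (Wn n) s) (φ W) atTop K := by
    intro K hK
    obtain ⟨r, hr⟩ := hK.isBounded.subset_closedBall 0
    have hsub : K ⊆ Set.Icc (-(|r| + 1)) (|r| + 1) := fun x hx => by
      have hx' := hr hx
      rw [Metric.mem_closedBall, Real.dist_eq, sub_zero] at hx'
      have h1 := abs_le.1 hx'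
      have h2 : r ≤ |r| := le_abs_self r
      have h3 : -|r| ≤ -r := neg_le_neg h2
      constructor <;> [linarith [h1.1]; linarith [h1.2]]
    exact (key (|r| + 1) (by positivity)).mono hsub
  refine ⟨part1, ?_⟩
  intro T hT K hK
  rw [Metric.tendstoUniformlyOn_iff]
  intro ε' hε'
  have hK' : IsCompact ((fun p : ℝ × ℝ => p.2 + p.1) '' (Set.Icc (-T) T ×ˢ K)) :=
    (isCompact_Icc.prod hK).image (continuous_snd.add continuous_fst)
  have h1 := hWn _ hK'
  rw [Metric.tendstoUniformlyOn_iff] at h1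
  have h2 := key T hT
  rw [Metric.tendstoUniformlyOn_iff] at h2
  filter_upwards [h1 (ε' / 2) (by linarith), h2 (ε' / 2) (by linarith)] with n hn1 hn2 p hp
  obtain ⟨hp1, hp2⟩ := hp
  have ha := hn1 (p.2 + p.1) ⟨p, ⟨hp1, hp2⟩, rfl⟩
  have hb := hn2 p.1 hp1
  show dist (W (p.2 + p.1) + φ W p.1) (Wn n (p.2 + p.1) + φ (Wn n) p.1) < ε'
  calc dist (W (p.2 + p.1) + φ W p.1) (Wn n (p.2 + p.1) + φ (Wn n) p.1)
      ≤ dist (W (p.2 + p.1)) (Wn n (p.2 + p.1)) + dist (φ W p.1) (φ (Wn n) p.1) :=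
        dist_add_add_le _ _ _ _
    _ < ε' / 2 + ε' / 2 := add_lt_add ha hb
    _ = ε' := by ring
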